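/- arXiv:1304.2088 — 7 statements merged into one kernel-verified Lean document; each statement's English description precedes it below -/
import Mathlib

section
/- Let α, β > 0 with 2β ≤ α. Suppose there is a family of sets (M_i) in ℝ² with designated points p_i ∈ ℝ² such that: (1) each M_i is contained in the closed ball of radius β centered at p_i; (2) dist(p_i, p_j) ≥ α for all i ≠ j; and (3) the unit lattice ℤ × ℤ is contained in the union of the M_i. Then for every d ∈ [2/α, 1/β], the lattice L_d can be covered by closed unit disks with pairwise disjoint interiors. -/
/-- The square lattice `(dℤ) × (dℤ)` in the Euclidean plane. -/
def squareLattice (d : ℝ) : Set (EuclideanSpace ℝ (Fin 2)) :=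
  {p | ∃ m n : ℤ, p 0 = d * m ∧ p 1 = d * n}

/-- A set `S ⊆ ℝ²` is coverable by closed unit disks with pairwise disjoint interiors:
there is a family of centers with pairwise distances at least `2` such that `S` is
contained in the union of the closed unit balls about the centers. -/
def CoverableByUnitDisks (S : Set (EuclideanSpace ℝ (Fin 2))) : Prop :=
  ∃ (ι : Type) (c : ι → EuclideanSpace ℝ (Fin 2)),
    (∀ i j, i ≠ j → 2 ≤ dist (c i) (c j)) ∧
    S ⊆ ⋃ i, Metric.closedBall (c i) 1

theorem motif_pattern_coverable (α β : ℝ) (hα : 0 < α) (hβ : 0 < β) (hadm : 2 * β ≤ α)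
    (ι : Type) (M : ι → Set (EuclideanSpace ℝ (Fin 2))) (p : ι → EuclideanSpace ℝ (Fin 2))
    (hM : ∀ i, M i ⊆ Metric.closedBall (p i) β)
    (hsep : ∀ i j, i ≠ j → α ≤ dist (p i) (p j))
    (hcov : squareLattice 1 ⊆ ⋃ i, M i) :
    ∀ d ∈ Set.Icc (2 / α) (1 / β), CoverableByUnitDisks (squareLattice d) := by
  rintro d ⟨hd1, hd2⟩
  have hd0 : 0 < d := lt_of_lt_of_le (div_pos two_pos hα) hd1
  refine ⟨ι, fun i => d • p i, ?_, ?_⟩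
  · intro i j hij
    have := hsep i j hij
    have hdist : dist (d • p i) (d • p j) = d * dist (p i) (p j) := by
      rw [dist_smul₀, Real.norm_eq_abs, abs_of_pos hd0]
    rw [hdist]
    calc (2 : ℝ) = (2 / α) * α := by field_simp
    _ ≤ d * dist (p i) (p j) :=
      mul_le_mul hd1 this hα.le hd0.le
  · rintro x ⟨m, n, hx0, hx1⟩
    have hq : (d⁻¹ • x) ∈ squareLattice 1 := by
      refine ⟨m, n, ?_, ?_⟩ <;>
        simp [PiLp.smul_apply, hx0, hx1, smul_eq_mul] <;> field_simp <;> ring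
    obtain ⟨s, ⟨i, rfl⟩, hs⟩ := hcov hq
    have hball := hM i hs
    refine Set.mem_iUnion.2 ⟨i, ?_⟩
    have hx : x = d • (d⁻¹ • x) := by rw [smul_smul, mul_inv_cancel₀ hd0.ne', one_smul]
    rw [Metric.mem_closedBall] at hball ⊢
    rw [hx, dist_smul₀, Real.norm_eq_abs, abs_of_pos hd0]
    calc d * dist (d⁻¹ • x) (p i) ≤ d * β := by
          exact mul_le_mul_of_nonneg_left hball hd0.le
    _ ≤ (1 / β) * β := mul_le_mul_of_nonneg_right hd2 hβ.le
    _ = 1 := by field_simp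
end

section
/- For every real number d with 2/√13 ≤ d ≤ √(2/5), the lattice L_d can be covered by closed unit disks with pairwise disjoint interiors. -/
lemma cover_key' (r1 r2 : ℤ) (h1 : 0 ≤ r1) (h2 : r1 < 4) (h3 : 0 ≤ r2) (h4 : r2 < 6) :
    ∃ a b u v : ℤ, r1 = 2*a - 2*b + u ∧ r2 = 3*a + 3*b + v ∧
      (2*u-1)^2 + (2*v-1)^2 ≤ 10 := by
  interval_cases r1 <;> interval_cases r2
  · exact ⟨0, 0, 0, 0, by norm_num, by norm_num, by norm_num⟩
  · exact ⟨0, 0, 0, 1, by norm_num, by norm_num, by norm_num⟩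
  · exact ⟨0, 0, 0, 2, by norm_num, by norm_num, by norm_num⟩
  · exact ⟨0, 1, 2, 0, by norm_num, by norm_num, by norm_num⟩
  · exact ⟨0, 1, 2, 1, by norm_num, by norm_num, by norm_num⟩
  · exact ⟨1, 1, 0, -1, by norm_num, by norm_num, by norm_num⟩
  · exact ⟨0, 0, 1, 0, by norm_num, by norm_num, by norm_num⟩
  · exact ⟨0, 0, 1, 1, by norm_num, by norm_num, by norm_num⟩
  · exact ⟨0, 0, 1, 2, by norm_num, by norm_num, by norm_num⟩
  · exact ⟨1, 0, -1, 0, by norm_num, by norm_num, by norm_num⟩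
  · exact ⟨1, 0, -1, 1, by norm_num, by norm_num, by norm_num⟩
  · exact ⟨1, 1, 1, -1, by norm_num, by norm_num, by norm_num⟩
  · exact ⟨0, 0, 2, 0, by norm_num, by norm_num, by norm_num⟩
  · exact ⟨0, 0, 2, 1, by norm_num, by norm_num, by norm_num⟩
  · exact ⟨1, 0, 0, -1, by norm_num, by norm_num, by norm_num⟩
  · exact ⟨1, 0, 0, 0, by norm_num, by norm_num, by norm_num⟩
  · exact ⟨1, 0, 0, 1, by norm_num, by norm_num, by norm_num⟩
  · exact ⟨1, 0, 0, 2, by norm_num, by norm_num, by norm_num⟩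
  · exact ⟨1, -1, -1, 0, by norm_num, by norm_num, by norm_num⟩
  · exact ⟨1, -1, -1, 1, by norm_num, by norm_num, by norm_num⟩
  · exact ⟨1, 0, 1, -1, by norm_num, by norm_num, by norm_num⟩
  · exact ⟨1, 0, 1, 0, by norm_num, by norm_num, by norm_num⟩
  · exact ⟨1, 0, 1, 1, by norm_num, by norm_num, by norm_num⟩
  · exact ⟨1, 0, 1, 2, by norm_num, by norm_num, by norm_num⟩

lemma cover_key (i j : ℤ) : ∃ a b u v : ℤ, i = 2*a - 2*b + u ∧ j = 3*a + 3*b + v ∧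
    (2*u-1)^2 + (2*v-1)^2 ≤ 10 := by
  obtain ⟨a, b, u, v, e1, e2, e3⟩ := cover_key' (i % 4) (j % 6)
    (by omega) (by omega) (by omega) (by omega)
  exact ⟨a + i / 4 + j / 6, b - i / 4 + j / 6, u, v, by omega, by omega, e3⟩

lemma quad_sep (m n : ℤ) (hpar : ∃ k, m + n = 2*k) (hne : ¬(m = 0 ∧ n = 0)) :
    13 ≤ 4*m^2 + 9*n^2 := by
  obtain ⟨k, hk⟩ := hpar
  rcases eq_or_ne m 0 with rfl | hm
  · have hn : 2 ≤ n ∨ n ≤ -2 := by omega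
    rcases hn with h | h <;> nlinarith
  rcases eq_or_ne n 0 with rfl | hn
  · have : 2 ≤ m ∨ m ≤ -2 := by omega
    rcases this with h | h <;> nlinarith
  · have h1 : 1 ≤ m ∨ m ≤ -1 := by omega
    have h2 : 1 ≤ n ∨ n ≤ -1 := by omega
    rcases h1 with h | h <;> rcases h2 with h' | h' <;> nlinarith

theorem lattice_coverable_interval1 (d : ℝ)
    (hd : d ∈ Set.Icc (2 / Real.sqrt 13) (Real.sqrt (2 / 5))) :
    CoverableByUnitDisks (squareLattice d) := by
  obtain ⟨hdl, hdu⟩ := hd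
  have h13 : (0:ℝ) < Real.sqrt 13 := Real.sqrt_pos.mpr (by norm_num)
  have hd0 : 0 < d := lt_of_lt_of_le (by positivity) hdl
  have hsq13 : (Real.sqrt 13) ^ 2 = 13 := Real.sq_sqrt (by norm_num)
  have hsq25 : (Real.sqrt (2/5)) ^ 2 = 2/5 := Real.sq_sqrt (by norm_num)
  have hdsq_lo : 4 / 13 ≤ d ^ 2 := by
    have h := pow_le_pow_left₀ (by positivity) hdl 2
    rw [div_pow, hsq13] at h
    linarith [h]
  have hdsq_hi : d ^ 2 ≤ 2 / 5 := by
    have h := pow_le_pow_left₀ hd0.le hdu 2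
    rw [hsq25] at h
    linarith [h]
  refine ⟨ℤ × ℤ, fun p => (WithLp.equiv 2 (Fin 2 → ℝ)).symm
      ![d * (2*p.1 - 2*p.2 + 1/2), d * (3*p.1 + 3*p.2 + 1/2)], ?_, ?_⟩
  · rintro ⟨a₁, b₁⟩ ⟨a₂, b₂⟩ hne
    have hq : (13:ℤ) ≤ 4*((a₁-b₁)-(a₂-b₂))^2 + 9*((a₁+b₁)-(a₂+b₂))^2 := by
      apply quad_sep _ _ ⟨a₁ - a₂, by ring⟩
      rintro ⟨hm, hn⟩
      exact hne (by rw [Prod.mk.injEq]; constructor <;> omega)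
    have hqr : (13:ℝ) ≤ 4*(((a₁:ℝ)-b₁)-((a₂:ℝ)-b₂))^2 + 9*(((a₁:ℝ)+b₁)-((a₂:ℝ)+b₂))^2 := by
      exact_mod_cast hq
    rw [EuclideanSpace.dist_eq]
    rw [Real.le_sqrt' (by norm_num : (0:ℝ) < 2)]
    rw [Fin.sum_univ_two]
    simp only [WithLp.equiv_symm_apply, WithLp.ofLp_toLp, Matrix.cons_val_zero, Matrix.cons_val_one,
      Matrix.head_cons, Real.dist_eq, sq_abs]
    have hmul : (4/13:ℝ) * 13 ≤ d^2 *
        (4*(((a₁:ℝ)-b₁)-((a₂:ℝ)-b₂))^2 + 9*(((a₁:ℝ)+b₁)-((a₂:ℝ)+b₂))^2) :=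
      mul_le_mul hdsq_lo hqr (by norm_num) (sq_nonneg d)
    nlinarith [hmul]
  · rintro p ⟨i, j, hi, hj⟩
    obtain ⟨a, b, u, v, e1, e2, e3⟩ := cover_key i j
    refine Set.mem_iUnion.mpr ⟨(a, b), ?_⟩
    rw [Metric.mem_closedBall, EuclideanSpace.dist_eq]
    refine le_trans (Real.sqrt_le_sqrt ?_) (le_of_eq Real.sqrt_one)
    rw [Fin.sum_univ_two]
    simp only [WithLp.equiv_symm_apply, WithLp.ofLp_toLp, Matrix.cons_val_zero, Matrix.cons_val_one,
      Matrix.head_cons, Real.dist_eq, sq_abs, hi, hj]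
    have e1r : (i:ℝ) = 2*a - 2*b + u := by exact_mod_cast e1
    have e2r : (j:ℝ) = 3*a + 3*b + v := by exact_mod_cast e2
    have e3r : (2*(u:ℝ)-1)^2 + (2*(v:ℝ)-1)^2 ≤ 10 := by exact_mod_cast e3
    have hmul : d^2 * ((2*(u:ℝ)-1)^2 + (2*(v:ℝ)-1)^2) ≤ (2/5:ℝ) * 10 :=
      mul_le_mul hdsq_hi e3r (by positivity) (by norm_num)
    rw [e1r, e2r]
    nlinarith [hmul]
end

section
/- For every real number d with 2/3 ≤ d ≤ 1/√2, the lattice L_d can be covered by closed unit disks with pairwise disjoint interiors. -/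
theorem lattice_coverable_interval3 (d : ℝ)
    (hd : d ∈ Set.Icc (2 / 3) (1 / Real.sqrt 2)) :
    CoverableByUnitDisks (squareLattice d) := by
  obtain ⟨hd1, hd2⟩ := hd
  have hd0 : (0:ℝ) < d := lt_of_lt_of_le (by norm_num) hd1
  have hdsq : d ^ 2 ≤ 1 / 2 := by
    have h := pow_le_pow_left₀ hd0.le hd2 2
    have h2 : (1 / Real.sqrt 2) ^ 2 = 1 / 2 := by
      rw [div_pow, one_pow, Real.sq_sqrt (by norm_num : (0:ℝ) ≤ 2)]
    linarith [h2 ▸ h]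
  have hdist : ∀ x y : EuclideanSpace ℝ (Fin 2),
      dist x y = Real.sqrt ((x 0 - y 0)^2 + (x 1 - y 1)^2) := by
    intro x y
    rw [EuclideanSpace.dist_eq, Fin.sum_univ_two]
    simp [Real.dist_eq, sq_abs]
  refine ⟨ℤ × ℤ, fun q => (!₂[d*(3*q.1+1), d*(3*q.2+1)] : EuclideanSpace ℝ (Fin 2)),
    ?_, ?_⟩
  · intro i j hij
    have hne : i.1 ≠ j.1 ∨ i.2 ≠ j.2 := by
      by_contra h
      push_neg at h
      exact hij (Prod.ext h.1 h.2)
    set a : ℝ := ((i.1 - j.1 : ℤ) : ℝ) with ha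
    set b : ℝ := ((i.2 - j.2 : ℤ) : ℝ) with hb
    have hab : 1 ≤ a^2 + b^2 := by
      rcases hne with h | h
      · have : (1:ℤ) ≤ |i.1 - j.1| := Int.one_le_abs (sub_ne_zero.mpr h)
        have h1 : (1:ℝ) ≤ |a| := by
          rw [ha, ← Int.cast_abs]; exact_mod_cast this
        nlinarith [sq_nonneg b, sq_abs a]
      · have : (1:ℤ) ≤ |i.2 - j.2| := Int.one_le_abs (sub_ne_zero.mpr h)
        have h1 : (1:ℝ) ≤ |b| := by
          rw [hb, ← Int.cast_abs]; exact_mod_cast this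
        nlinarith [sq_nonneg a, sq_abs b]
    rw [hdist]
    have e0 : (!₂[d*(3*(i.1:ℝ)+1), d*(3*(i.2:ℝ)+1)] : EuclideanSpace ℝ (Fin 2)) 0 = d*(3*(i.1:ℝ)+1) := rfl
    have key : ((d*(3*(i.1:ℝ)+1)) - (d*(3*(j.1:ℝ)+1)))^2 + ((d*(3*(i.2:ℝ)+1)) - (d*(3*(j.2:ℝ)+1)))^2
        = 9 * d^2 * (a^2 + b^2) := by
      rw [ha, hb]; push_cast; ring
    show (2:ℝ) ≤ Real.sqrt _
    rw [show ((fun q : ℤ × ℤ => (!₂[d*(3*q.1+1), d*(3*q.2+1)] : EuclideanSpace ℝ (Fin 2))) i 0) = d*(3*(i.1:ℝ)+1) from rfl]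
    rw [show ((fun q : ℤ × ℤ => (!₂[d*(3*q.1+1), d*(3*q.2+1)] : EuclideanSpace ℝ (Fin 2))) j 0) = d*(3*(j.1:ℝ)+1) from rfl]
    rw [show ((fun q : ℤ × ℤ => (!₂[d*(3*q.1+1), d*(3*q.2+1)] : EuclideanSpace ℝ (Fin 2))) i 1) = d*(3*(i.2:ℝ)+1) from rfl]
    rw [show ((fun q : ℤ × ℤ => (!₂[d*(3*q.1+1), d*(3*q.2+1)] : EuclideanSpace ℝ (Fin 2))) j 1) = d*(3*(j.2:ℝ)+1) from rfl]
    rw [key]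
    have h4 : (4:ℝ) ≤ 9 * d^2 * (a^2 + b^2) := by nlinarith
    calc (2:ℝ) = Real.sqrt 4 := by rw [show (4:ℝ) = 2^2 by norm_num, Real.sqrt_sq (by norm_num)]
    _ ≤ _ := Real.sqrt_le_sqrt h4
  · rintro p ⟨m, n, hm, hn⟩
    refine Set.mem_iUnion.mpr ⟨(m / 3, n / 3), ?_⟩
    rw [Metric.mem_closedBall, hdist]
    have hm3 : (3:ℤ) * (m / 3) + m % 3 = m := Int.mul_ediv_add_emod m 3
    have hn3 : (3:ℤ) * (n / 3) + n % 3 = n := Int.mul_ediv_add_emod n 3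
    set r : ℝ := ((m % 3 : ℤ) : ℝ) with hr
    set s : ℝ := ((n % 3 : ℤ) : ℝ) with hs
    have hr0 : 0 ≤ r := by rw [hr]; exact_mod_cast Int.emod_nonneg m (by norm_num)
    have hr2 : r ≤ 2 := by rw [hr]; exact_mod_cast (by omega : m % 3 ≤ 2)
    have hs0 : 0 ≤ s := by rw [hs]; exact_mod_cast Int.emod_nonneg n (by norm_num)
    have hs2 : s ≤ 2 := by rw [hs]; exact_mod_cast (by omega : n % 3 ≤ 2)
    have hmr : (m:ℝ) = 3 * ((m / 3 : ℤ) : ℝ) + r := by rw [hr]; exact_mod_cast hm3.symm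
    have hns : (n:ℝ) = 3 * ((n / 3 : ℤ) : ℝ) + s := by rw [hs]; exact_mod_cast hn3.symm
    rw [show ((fun q : ℤ × ℤ => (!₂[d*(3*q.1+1), d*(3*q.2+1)] : EuclideanSpace ℝ (Fin 2))) (m/3, n/3) 0) = d*(3*((m/3 : ℤ):ℝ)+1) from rfl]
    rw [show ((fun q : ℤ × ℤ => (!₂[d*(3*q.1+1), d*(3*q.2+1)] : EuclideanSpace ℝ (Fin 2))) (m/3, n/3) 1) = d*(3*((n/3 : ℤ):ℝ)+1) from rfl]
    rw [hm, hn]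
    have key : (d*(m:ℝ) - d*(3*((m/3 : ℤ):ℝ)+1))^2 + (d*(n:ℝ) - d*(3*((n/3 : ℤ):ℝ)+1))^2
        = d^2 * ((r-1)^2 + (s-1)^2) := by rw [hmr, hns]; ring
    rw [key]
    have hle : d^2 * ((r-1)^2 + (s-1)^2) ≤ 1 := by nlinarith
    calc Real.sqrt _ ≤ Real.sqrt 1 := Real.sqrt_le_sqrt hle
    _ = 1 := Real.sqrt_one
end

section
/- For every real number d with 4/√26 ≤ d ≤ 2/√5, the lattice L_d can be covered by closed unit disks with pairwise disjoint interiors. -/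
private def bxZ : Fin 6 → ℤ := ![4, 3, 8, 13, 23, 18]
private def byZ : Fin 6 → ℤ := ![5, 0, 1, 2, 4, 3]

private lemma sq_le_25 {Y : ℤ} (h : Y ^ 2 ≤ 25) : -5 ≤ Y ∧ Y ≤ 5 := by
  constructor
  · nlinarith [sq_nonneg (Y + 5)]
  · nlinarith [sq_nonneg (Y - 5)]

private lemma helper (a b cc e : ℤ) (i j i' j' : ℤ)
    (hf1 : -23 ≤ a - cc) (hf2 : a - cc ≤ 23)
    (he1 : -5 ≤ b - e) (he2 : b - e ≤ 5)
    (H : ∀ m n : ℤ, -1 ≤ m → m ≤ 1 → -1 ≤ n → n ≤ 1 →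
      26 ≤ (a - cc + 24 * m + 6 * n) ^ 2 + (b - e + 6 * n) ^ 2) :
    26 ≤ ((a + 24 * i + 6 * j) - (cc + 24 * i' + 6 * j')) ^ 2
      + ((b + 6 * j) - (e + 6 * j')) ^ 2 := by
  have hX : (a + 24 * i + 6 * j) - (cc + 24 * i' + 6 * j')
      = a - cc + 24 * (i - i') + 6 * (j - j') := by ring
  have hY : (b + 6 * j) - (e + 6 * j') = b - e + 6 * (j - j') := by ring
  rw [hX, hY]
  by_contra hlt
  push_neg at hlt
  have hX25 : (a - cc + 24 * (i - i') + 6 * (j - j')) ^ 2 ≤ 25 := by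
    nlinarith [sq_nonneg (b - e + 6 * (j - j'))]
  have hY25 : (b - e + 6 * (j - j')) ^ 2 ≤ 25 := by
    nlinarith [sq_nonneg (a - cc + 24 * (i - i') + 6 * (j - j'))]
  obtain ⟨hx1, hx2⟩ := sq_le_25 hX25
  obtain ⟨hy1, hy2⟩ := sq_le_25 hY25
  have hn1 : -1 ≤ j - j' := by omega
  have hn2 : j - j' ≤ 1 := by omega
  have hm1 : -1 ≤ i - i' := by omega
  have hm2 : i - i' ≤ 1 := by omega
  have := H (i - i') (j - j') hm1 hm2 hn1 hn2
  linarith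

private lemma diag (a b : ℤ) (i j i' j' : ℤ) (h : ¬(i = i' ∧ j = j')) :
    26 ≤ ((a + 24 * i + 6 * j) - (a + 24 * i' + 6 * j')) ^ 2
      + ((b + 6 * j) - (b + 6 * j')) ^ 2 := by
  have hX : (a + 24 * i + 6 * j) - (a + 24 * i' + 6 * j')
      = 24 * (i - i') + 6 * (j - j') := by ring
  have hY : (b + 6 * j) - (b + 6 * j') = 6 * (j - j') := by ring
  rw [hX, hY]
  rcases eq_or_ne j j' with rfl | hj
  · have hi : i ≠ i' := fun hc => h ⟨hc, rfl⟩
    have h1 : 1 ≤ (i - i') ^ 2 := by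
      rcases lt_or_gt_of_ne (sub_ne_zero.mpr hi) with h' | h' <;> nlinarith
    nlinarith [h1]
  · have h1 : 1 ≤ (j - j') ^ 2 := by
      rcases lt_or_gt_of_ne (sub_ne_zero.mpr hj) with h' | h' <;> nlinarith
    nlinarith [h1, sq_nonneg (24 * (i - i') + 6 * (j - j'))]

private lemma sep (k k' : Fin 6) (i j i' j' : ℤ)
    (h : ¬(k = k' ∧ i = i' ∧ j = j')) :
    26 ≤ ((bxZ k + 24 * i + 6 * j) - (bxZ k' + 24 * i' + 6 * j')) ^ 2
      + ((byZ k + 6 * j) - (byZ k' + 6 * j')) ^ 2 := by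
  fin_cases k <;> fin_cases k'
  · exact diag _ _ i j i' j' (fun hc => h ⟨rfl, hc.1, hc.2⟩)
  · refine helper _ _ _ _ i j i' j' (by decide) (by decide) (by decide) (by decide) ?_
    intro m n h1 h2 h3 h4
    interval_cases m <;> interval_cases n <;> decide
  · refine helper _ _ _ _ i j i' j' (by decide) (by decide) (by decide) (by decide) ?_
    intro m n h1 h2 h3 h4
    interval_cases m <;> interval_cases n <;> decide
  · refine helper _ _ _ _ i j i' j' (by decide) (by decide) (by decide) (by decide) ?_
    intro m n h1 h2 h3 h4
    interval_cases m <;> interval_cases n <;> decide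
  · refine helper _ _ _ _ i j i' j' (by decide) (by decide) (by decide) (by decide) ?_
    intro m n h1 h2 h3 h4
    interval_cases m <;> interval_cases n <;> decide
  · refine helper _ _ _ _ i j i' j' (by decide) (by decide) (by decide) (by decide) ?_
    intro m n h1 h2 h3 h4
    interval_cases m <;> interval_cases n <;> decide
  · refine helper _ _ _ _ i j i' j' (by decide) (by decide) (by decide) (by decide) ?_
    intro m n h1 h2 h3 h4
    interval_cases m <;> interval_cases n <;> decide
  · exact diag _ _ i j i' j' (fun hc => h ⟨rfl, hc.1, hc.2⟩)
  · refine helper _ _ _ _ i j i' j' (by decide) (by decide) (by decide) (by decide) ?_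
    intro m n h1 h2 h3 h4
    interval_cases m <;> interval_cases n <;> decide
  · refine helper _ _ _ _ i j i' j' (by decide) (by decide) (by decide) (by decide) ?_
    intro m n h1 h2 h3 h4
    interval_cases m <;> interval_cases n <;> decide
  · refine helper _ _ _ _ i j i' j' (by decide) (by decide) (by decide) (by decide) ?_
    intro m n h1 h2 h3 h4
    interval_cases m <;> interval_cases n <;> decide
  · refine helper _ _ _ _ i j i' j' (by decide) (by decide) (by decide) (by decide) ?_
    intro m n h1 h2 h3 h4
    interval_cases m <;> interval_cases n <;> decide
  · refine helper _ _ _ _ i j i' j' (by decide) (by decide) (by decide) (by decide) ?_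
    intro m n h1 h2 h3 h4
    interval_cases m <;> interval_cases n <;> decide
  · refine helper _ _ _ _ i j i' j' (by decide) (by decide) (by decide) (by decide) ?_
    intro m n h1 h2 h3 h4
    interval_cases m <;> interval_cases n <;> decide
  · exact diag _ _ i j i' j' (fun hc => h ⟨rfl, hc.1, hc.2⟩)
  · refine helper _ _ _ _ i j i' j' (by decide) (by decide) (by decide) (by decide) ?_
    intro m n h1 h2 h3 h4
    interval_cases m <;> interval_cases n <;> decide
  · refine helper _ _ _ _ i j i' j' (by decide) (by decide) (by decide) (by decide) ?_
    intro m n h1 h2 h3 h4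
    interval_cases m <;> interval_cases n <;> decide
  · refine helper _ _ _ _ i j i' j' (by decide) (by decide) (by decide) (by decide) ?_
    intro m n h1 h2 h3 h4
    interval_cases m <;> interval_cases n <;> decide
  · refine helper _ _ _ _ i j i' j' (by decide) (by decide) (by decide) (by decide) ?_
    intro m n h1 h2 h3 h4
    interval_cases m <;> interval_cases n <;> decide
  · refine helper _ _ _ _ i j i' j' (by decide) (by decide) (by decide) (by decide) ?_
    intro m n h1 h2 h3 h4
    interval_cases m <;> interval_cases n <;> decide
  · refine helper _ _ _ _ i j i' j' (by decide) (by decide) (by decide) (by decide) ?_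
    intro m n h1 h2 h3 h4
    interval_cases m <;> interval_cases n <;> decide
  · exact diag _ _ i j i' j' (fun hc => h ⟨rfl, hc.1, hc.2⟩)
  · refine helper _ _ _ _ i j i' j' (by decide) (by decide) (by decide) (by decide) ?_
    intro m n h1 h2 h3 h4
    interval_cases m <;> interval_cases n <;> decide
  · refine helper _ _ _ _ i j i' j' (by decide) (by decide) (by decide) (by decide) ?_
    intro m n h1 h2 h3 h4
    interval_cases m <;> interval_cases n <;> decide
  · refine helper _ _ _ _ i j i' j' (by decide) (by decide) (by decide) (by decide) ?_
    intro m n h1 h2 h3 h4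
    interval_cases m <;> interval_cases n <;> decide
  · refine helper _ _ _ _ i j i' j' (by decide) (by decide) (by decide) (by decide) ?_
    intro m n h1 h2 h3 h4
    interval_cases m <;> interval_cases n <;> decide
  · refine helper _ _ _ _ i j i' j' (by decide) (by decide) (by decide) (by decide) ?_
    intro m n h1 h2 h3 h4
    interval_cases m <;> interval_cases n <;> decide
  · refine helper _ _ _ _ i j i' j' (by decide) (by decide) (by decide) (by decide) ?_
    intro m n h1 h2 h3 h4
    interval_cases m <;> interval_cases n <;> decide
  · exact diag _ _ i j i' j' (fun hc => h ⟨rfl, hc.1, hc.2⟩)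
  · refine helper _ _ _ _ i j i' j' (by decide) (by decide) (by decide) (by decide) ?_
    intro m n h1 h2 h3 h4
    interval_cases m <;> interval_cases n <;> decide
  · refine helper _ _ _ _ i j i' j' (by decide) (by decide) (by decide) (by decide) ?_
    intro m n h1 h2 h3 h4
    interval_cases m <;> interval_cases n <;> decide
  · refine helper _ _ _ _ i j i' j' (by decide) (by decide) (by decide) (by decide) ?_
    intro m n h1 h2 h3 h4
    interval_cases m <;> interval_cases n <;> decide
  · refine helper _ _ _ _ i j i' j' (by decide) (by decide) (by decide) (by decide) ?_
    intro m n h1 h2 h3 h4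
    interval_cases m <;> interval_cases n <;> decide
  · refine helper _ _ _ _ i j i' j' (by decide) (by decide) (by decide) (by decide) ?_
    intro m n h1 h2 h3 h4
    interval_cases m <;> interval_cases n <;> decide
  · refine helper _ _ _ _ i j i' j' (by decide) (by decide) (by decide) (by decide) ?_
    intro m n h1 h2 h3 h4
    interval_cases m <;> interval_cases n <;> decide
  · exact diag _ _ i j i' j' (fun hc => h ⟨rfl, hc.1, hc.2⟩)

private lemma cover_table (u r : ℤ) (hu1 : 0 ≤ u) (hu2 : u < 12)
    (hr1 : 0 ≤ r) (hr2 : r < 3) :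
    ∃ (k : Fin 6) (i0 j0 : ℤ),
      (2 * u - (bxZ k + 24 * i0 + 6 * j0)) ^ 2 + (2 * r - (byZ k + 6 * j0)) ^ 2 ≤ 5 := by
  interval_cases u <;> interval_cases r
  · exact ⟨0, 0, -1, by decide⟩
  · exact ⟨4, -1, 0, by decide⟩
  · exact ⟨4, -1, 0, by decide⟩
  · exact ⟨1, 0, 0, by decide⟩
  · exact ⟨1, 0, 0, by decide⟩
  · exact ⟨0, 0, 0, by decide⟩
  · exact ⟨1, 0, 0, by decide⟩
  · exact ⟨1, 0, 0, by decide⟩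
  · exact ⟨0, 0, 0, by decide⟩
  · exact ⟨2, 0, 0, by decide⟩
  · exact ⟨2, 0, 0, by decide⟩
  · exact ⟨0, 0, 0, by decide⟩
  · exact ⟨2, 0, 0, by decide⟩
  · exact ⟨2, 0, 0, by decide⟩
  · exact ⟨1, 0, 1, by decide⟩
  · exact ⟨2, 0, 0, by decide⟩
  · exact ⟨2, 0, 0, by decide⟩
  · exact ⟨1, 0, 1, by decide⟩
  · exact ⟨3, 0, 0, by decide⟩
  · exact ⟨3, 0, 0, by decide⟩
  · exact ⟨3, 0, 0, by decide⟩
  · exact ⟨3, 0, 0, by decide⟩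
  · exact ⟨3, 0, 0, by decide⟩
  · exact ⟨3, 0, 0, by decide⟩
  · exact ⟨4, 0, -1, by decide⟩
  · exact ⟨5, 0, 0, by decide⟩
  · exact ⟨5, 0, 0, by decide⟩
  · exact ⟨4, 0, -1, by decide⟩
  · exact ⟨5, 0, 0, by decide⟩
  · exact ⟨5, 0, 0, by decide⟩
  · exact ⟨0, 1, -1, by decide⟩
  · exact ⟨5, 0, 0, by decide⟩
  · exact ⟨5, 0, 0, by decide⟩
  · exact ⟨0, 1, -1, by decide⟩
  · exact ⟨4, 0, 0, by decide⟩
  · exact ⟨4, 0, 0, by decide⟩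

theorem lattice_coverable_interval4 (d : ℝ)
    (hd : d ∈ Set.Icc (4 / Real.sqrt 26) (2 / Real.sqrt 5)) :
    CoverableByUnitDisks (squareLattice d) := by
  obtain ⟨hd1, hd2⟩ := hd
  have h26 : (Real.sqrt 26) ^ 2 = 26 := Real.sq_sqrt (by norm_num)
  have h5 : (Real.sqrt 5) ^ 2 = 5 := Real.sq_sqrt (by norm_num)
  have hs26 : 0 < Real.sqrt 26 := Real.sqrt_pos.mpr (by norm_num)
  have hs5 : 0 < Real.sqrt 5 := Real.sqrt_pos.mpr (by norm_num)
  have hdpos : 0 < d := lt_of_lt_of_le (by positivity) hd1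
  have hA : 4 ≤ d * Real.sqrt 26 := by
    rw [div_le_iff₀ hs26] at hd1; linarith
  have hB : d * Real.sqrt 5 ≤ 2 := by
    rw [le_div_iff₀ hs5] at hd2; linarith
  have hA2 : (d * Real.sqrt 26) ^ 2 = 26 * d ^ 2 := by
    rw [mul_pow, h26]; ring
  have hB2 : (d * Real.sqrt 5) ^ 2 = 5 * d ^ 2 := by
    rw [mul_pow, h5]; ring
  have hC : 0 ≤ d * Real.sqrt 5 := by positivity
  have h16 : 16 ≤ 26 * d ^ 2 := by nlinarith [hA, hA2]
  have h45 : 5 * d ^ 2 ≤ 4 := by nlinarith [hB, hB2, hC]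
  refine ⟨Fin 6 × ℤ × ℤ,
    fun q => (WithLp.toLp 2 ![d / 2 * ((bxZ q.1 + 24 * q.2.1 + 6 * q.2.2 : ℤ) : ℝ),
               d / 2 * ((byZ q.1 + 6 * q.2.2 : ℤ) : ℝ)] :
      EuclideanSpace ℝ (Fin 2)), ?_, ?_⟩
  · rintro ⟨k, i, j⟩ ⟨k', i', j'⟩ hne
    have hkey : 26 ≤ ((bxZ k + 24 * i + 6 * j) - (bxZ k' + 24 * i' + 6 * j')) ^ 2
        + ((byZ k + 6 * j) - (byZ k' + 6 * j')) ^ 2 := by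
      apply sep
      rintro ⟨h1, h2, h3⟩
      exact hne (by rw [h1, h2, h3])
    have hkeyR : (26 : ℝ) ≤
        (((bxZ k + 24 * i + 6 * j : ℤ) : ℝ) - ((bxZ k' + 24 * i' + 6 * j' : ℤ) : ℝ)) ^ 2
        + (((byZ k + 6 * j : ℤ) : ℝ) - ((byZ k' + 6 * j' : ℤ) : ℝ)) ^ 2 := by
      exact_mod_cast hkey
    rw [EuclideanSpace.dist_eq, Fin.sum_univ_two]
    simp only [WithLp.ofLp_toLp, PiLp.toLp_apply, Matrix.cons_val_zero, Matrix.cons_val_one, Matrix.head_cons, Real.dist_eq,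
      sq_abs]
    have h4 : (4 : ℝ) ≤
        (d / 2 * ((bxZ k + 24 * i + 6 * j : ℤ) : ℝ) -
          d / 2 * ((bxZ k' + 24 * i' + 6 * j' : ℤ) : ℝ)) ^ 2 +
        (d / 2 * ((byZ k + 6 * j : ℤ) : ℝ) -
          d / 2 * ((byZ k' + 6 * j' : ℤ) : ℝ)) ^ 2 := by
      nlinarith [hkeyR, h16, sq_nonneg d]
    calc (2 : ℝ) = Real.sqrt 4 := by
          rw [show (4 : ℝ) = 2 ^ 2 by norm_num, Real.sqrt_sq (by norm_num)]
      _ ≤ _ := Real.sqrt_le_sqrt h4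
  · rintro p ⟨m, n, h0, h1⟩
    obtain ⟨a, r, hr1, hr2, hn⟩ : ∃ a r : ℤ, 0 ≤ r ∧ r < 3 ∧ n = 3 * a + r :=
      ⟨n / 3, n % 3, by omega, by omega, by omega⟩
    obtain ⟨b, u, hu1, hu2, hm⟩ : ∃ b u : ℤ, 0 ≤ u ∧ u < 12 ∧ m - 3 * a = 12 * b + u :=
      ⟨(m - 3 * a) / 12, (m - 3 * a) % 12, by omega, by omega, by omega⟩
    obtain ⟨k, i0, j0, hcov⟩ := cover_table u r hu1 hu2 hr1 hr2
    simp only [Set.mem_iUnion, Metric.mem_closedBall]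
    refine ⟨⟨k, i0 + b, j0 + a⟩, ?_⟩
    have e1 : 2 * m - (bxZ k + 24 * (i0 + b) + 6 * (j0 + a))
        = 2 * u - (bxZ k + 24 * i0 + 6 * j0) := by linarith
    have e2 : 2 * n - (byZ k + 6 * (j0 + a)) = 2 * r - (byZ k + 6 * j0) := by linarith
    have hint : (2 * m - (bxZ k + 24 * (i0 + b) + 6 * (j0 + a))) ^ 2
        + (2 * n - (byZ k + 6 * (j0 + a))) ^ 2 ≤ 5 := by
      rw [e1, e2]; exact hcov
    have hintR : (((2 * m - (bxZ k + 24 * (i0 + b) + 6 * (j0 + a)) : ℤ) : ℝ)) ^ 2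
        + (((2 * n - (byZ k + 6 * (j0 + a)) : ℤ) : ℝ)) ^ 2 ≤ 5 := by
      exact_mod_cast hint
    rw [EuclideanSpace.dist_eq, Fin.sum_univ_two]
    simp only [WithLp.ofLp_toLp, PiLp.toLp_apply, Matrix.cons_val_zero, Matrix.cons_val_one, Matrix.head_cons, Real.dist_eq,
      sq_abs]
    rw [h0, h1]
    have hE : (d * (m : ℝ) - d / 2 * ((bxZ k + 24 * (i0 + b) + 6 * (j0 + a) : ℤ) : ℝ)) ^ 2
        + (d * (n : ℝ) - d / 2 * ((byZ k + 6 * (j0 + a) : ℤ) : ℝ)) ^ 2 ≤ 1 := by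
      have expand : (d * (m : ℝ) - d / 2 * ((bxZ k + 24 * (i0 + b) + 6 * (j0 + a) : ℤ) : ℝ)) ^ 2
          + (d * (n : ℝ) - d / 2 * ((byZ k + 6 * (j0 + a) : ℤ) : ℝ)) ^ 2
          = d ^ 2 / 4 * ((((2 * m - (bxZ k + 24 * (i0 + b) + 6 * (j0 + a)) : ℤ) : ℝ)) ^ 2
            + (((2 * n - (byZ k + 6 * (j0 + a)) : ℤ) : ℝ)) ^ 2) := by
        push_cast
        ring
      rw [expand]
      nlinarith [hintR, h45, sq_nonneg d,
        sq_nonneg (((2 * m - (bxZ k + 24 * (i0 + b) + 6 * (j0 + a)) : ℤ) : ℝ)),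
        sq_nonneg (((2 * n - (byZ k + 6 * (j0 + a)) : ℤ) : ℝ))]
    calc Real.sqrt ((d * (m : ℝ) - d / 2 * ((bxZ k + 24 * (i0 + b) + 6 * (j0 + a) : ℤ) : ℝ)) ^ 2
          + (d * (n : ℝ) - d / 2 * ((byZ k + 6 * (j0 + a) : ℤ) : ℝ)) ^ 2)
        ≤ Real.sqrt 1 := Real.sqrt_le_sqrt hE
      _ = 1 := Real.sqrt_one
end

section
/- For every real number d with 2/√5 ≤ d ≤ 1, the lattice L_d can be covered by closed unit disks with pairwise disjoint interiors. -/
/-- Every point of `ℤ²` is a plus-pentomino translate of the sublattice spanned by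
`(2,1)` and `(-1,2)`. -/
lemma plus_tiling (m n : ℤ) :
    ∃ a b : ℤ, (m = 2*a - b ∧ n = a + 2*b) ∨ (m = 2*a - b + 1 ∧ n = a + 2*b) ∨
      (m = 2*a - b - 1 ∧ n = a + 2*b) ∨ (m = 2*a - b ∧ n = a + 2*b + 1) ∨
      (m = 2*a - b ∧ n = a + 2*b - 1) := by
  have h : (2*m + n) % 5 = 0 ∨ (2*m + n) % 5 = 1 ∨ (2*m + n) % 5 = 2 ∨
      (2*m + n) % 5 = 3 ∨ (2*m + n) % 5 = 4 := by omega
  rcases h with h | h | h | h | h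
  · exact ⟨(2*m + n)/5, (2*n - m)/5, by omega⟩
  · exact ⟨(2*m + n - 1)/5, (2*(n-1) - m)/5, by omega⟩
  · exact ⟨(2*(m-1) + n)/5, (2*n - (m-1))/5, by omega⟩
  · exact ⟨(2*(m+1) + n)/5, (2*n - (m+1))/5, by omega⟩
  · exact ⟨(2*m + n + 1)/5, (2*(n+1) - m)/5, by omega⟩

theorem lattice_coverable_interval5 (d : ℝ)
    (hd : d ∈ Set.Icc (2 / Real.sqrt 5) 1) :
    CoverableByUnitDisks (squareLattice d) := by
  obtain ⟨hd1, hd2⟩ := hd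
  have h5 : (0:ℝ) < Real.sqrt 5 := Real.sqrt_pos.mpr (by norm_num)
  have hd0 : 0 < d := lt_of_lt_of_le (by positivity) hd1
  have hsq : Real.sqrt 5 ^ 2 = 5 := Real.sq_sqrt (by norm_num)
  have hd5 : 4 ≤ 5 * d ^ 2 := by
    have h1 : 2 / Real.sqrt 5 * (2 / Real.sqrt 5) ≤ d * d :=
      mul_le_mul hd1 hd1 (by positivity) (le_of_lt hd0)
    have h2 : 2 / Real.sqrt 5 * (2 / Real.sqrt 5) = 4 / 5 := by
      rw [div_mul_div_comm]
      rw [show Real.sqrt 5 * Real.sqrt 5 = 5 by nlinarith [hsq]]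
      norm_num
    nlinarith [h1, h2]
  refine ⟨ℤ × ℤ, fun ab => WithLp.toLp 2 ![d * (2 * ab.1 - ab.2), d * (ab.1 + 2 * ab.2)], ?_, ?_⟩
  · rintro ⟨a, b⟩ ⟨a', b'⟩ hne
    have hAB : (1:ℤ) ≤ (a - a')^2 + (b - b')^2 := by
      have : a ≠ a' ∨ b ≠ b' := by
        by_contra h
        push_neg at h
        exact hne (by simp [h.1, h.2])
      rcases this with h | h
      · nlinarith [sq_nonneg (b - b'), Int.one_le_abs (sub_ne_zero.mpr h),
          sq_abs (a - a'), sq_nonneg (|a - a'| - 1)]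
      · nlinarith [sq_nonneg (a - a'), Int.one_le_abs (sub_ne_zero.mpr h),
          sq_abs (b - b'), sq_nonneg (|b - b'| - 1)]
    have hABr : (1:ℝ) ≤ ((a:ℝ) - a')^2 + ((b:ℝ) - b')^2 := by
      exact_mod_cast hAB
    rw [EuclideanSpace.dist_eq]
    have hE : (4:ℝ) ≤ ∑ i, dist ((![d * (2 * (a:ℝ) - b), d * (a + 2 * b)]) i)
        ((![d * (2 * (a':ℝ) - b'), d * (a' + 2 * b')]) i) ^ 2 := by
      rw [Fin.sum_univ_two]
      simp only [Matrix.cons_val_zero, Matrix.cons_val_one, Matrix.head_cons, Real.dist_eq]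
      rw [sq_abs, sq_abs]
      have expand : (d * (2 * (a:ℝ) - b) - d * (2 * (a':ℝ) - b'))^2 +
          (d * ((a:ℝ) + 2 * b) - d * ((a':ℝ) + 2 * b'))^2 =
          5 * d^2 * (((a:ℝ) - a')^2 + ((b:ℝ) - b')^2) := by ring
      rw [expand]
      nlinarith [hd5, hABr, sq_nonneg d]
    calc (2:ℝ) = Real.sqrt 4 := by
          rw [show (4:ℝ) = 2^2 by norm_num, Real.sqrt_sq (by norm_num)]
      _ ≤ _ := Real.sqrt_le_sqrt hE
  · rintro p ⟨m, n, hp0, hp1⟩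
    obtain ⟨a, b, hcase⟩ := plus_tiling m n
    rw [Set.mem_iUnion]
    refine ⟨(a, b), ?_⟩
    rw [Metric.mem_closedBall, EuclideanSpace.dist_eq]
    have hle : ∑ i, dist (p i) ((![d * (2 * (a:ℝ) - b), d * (a + 2 * b)]) i) ^ 2 ≤ 1 := by
      rw [Fin.sum_univ_two]
      simp only [Matrix.cons_val_zero, Matrix.cons_val_one, Matrix.head_cons, Real.dist_eq]
      rw [sq_abs, sq_abs, hp0, hp1]
      rcases hcase with ⟨h1, h2⟩ | ⟨h1, h2⟩ | ⟨h1, h2⟩ | ⟨h1, h2⟩ | ⟨h1, h2⟩ <;>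
        rw [h1, h2] <;> push_cast <;> nlinarith [hd0, hd2]
    calc Real.sqrt _ ≤ Real.sqrt 1 := Real.sqrt_le_sqrt hle
      _ = 1 := Real.sqrt_one
end

section
/- For every real number d with 1 ≤ d ≤ √2, the lattice L_d can be covered by closed unit disks with pairwise disjoint interiors; indeed, the disks circumscribing the squares of the lattice cover the points four at a time. -/
noncomputable def ctr (d : ℝ) (mn : ℤ × ℤ) : EuclideanSpace ℝ (Fin 2) :=
  WithLp.toLp 2 ![d * (2 * mn.1 + 1/2), d * (2 * mn.2 + 1/2)]

lemma dist_pt (x y : EuclideanSpace ℝ (Fin 2)) :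
    dist x y = Real.sqrt ((x 0 - y 0)^2 + (x 1 - y 1)^2) := by
  rw [EuclideanSpace.dist_eq, Fin.sum_univ_two]
  simp [Real.dist_eq, sq_abs]

theorem lattice_coverable_interval6 (d : ℝ)
    (hd : d ∈ Set.Icc 1 (Real.sqrt 2)) :
    CoverableByUnitDisks (squareLattice d) := by
  obtain ⟨hd1, hd2⟩ := hd
  have hd0 : (0:ℝ) < d := lt_of_lt_of_le one_pos hd1
  have hsq : d ^ 2 ≤ 2 := by
    nlinarith [Real.sq_sqrt (by norm_num : (0:ℝ) ≤ 2), hd0.le,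
      Real.sqrt_nonneg 2, sq_nonneg (d - Real.sqrt 2)]
  refine ⟨ℤ × ℤ, ctr d, ?_, ?_⟩
  · intro i j hij
    rw [dist_pt]
    have hc0 : ctr d i 0 - ctr d j 0 = d * 2 * ((i.1 : ℝ) - j.1) := by
      simp [ctr]; ring
    have hc1 : ctr d i 1 - ctr d j 1 = d * 2 * ((i.2 : ℝ) - j.2) := by
      simp [ctr]; ring
    rw [hc0, hc1]
    have key : (4:ℝ) ≤ (d * 2 * ((i.1 : ℝ) - j.1))^2 + (d * 2 * ((i.2 : ℝ) - j.2))^2 := by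
      rcases not_and_or.mp (Prod.ext_iff.not.mp hij) with h | h
      · have h1 : (1:ℝ) ≤ |(i.1 : ℝ) - j.1| := by
          have : i.1 - j.1 ≠ 0 := sub_ne_zero.mpr h
          have := Int.one_le_abs this
          exact_mod_cast this
        nlinarith [sq_nonneg (d * 2 * ((i.2 : ℝ) - j.2)), sq_abs ((i.1:ℝ) - j.1),
          sq_nonneg (|(i.1:ℝ) - j.1| - 1)]
      · have h1 : (1:ℝ) ≤ |(i.2 : ℝ) - j.2| := by
          have : i.2 - j.2 ≠ 0 := sub_ne_zero.mpr h
          have := Int.one_le_abs this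
          exact_mod_cast this
        nlinarith [sq_nonneg (d * 2 * ((i.1 : ℝ) - j.1)), sq_abs ((i.2:ℝ) - j.2),
          sq_nonneg (|(i.2:ℝ) - j.2| - 1)]
    calc (2:ℝ) = Real.sqrt 4 := by rw [show (4:ℝ) = 2^2 by norm_num, Real.sqrt_sq]; norm_num
      _ ≤ _ := Real.sqrt_le_sqrt key
  · rintro p ⟨m, n, h0, h1⟩
    refine Set.mem_iUnion.mpr ⟨(m / 2, n / 2), ?_⟩
    rw [Metric.mem_closedBall, dist_pt]
    have hm : (m : ℝ) - (2 * (m / 2 : ℤ) + 1/2) = (m % 2 : ℤ) - 1/2 := by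
      have := Int.mul_ediv_add_emod m 2
      have : (m:ℝ) = 2 * ((m/2 : ℤ):ℝ) + ((m % 2 : ℤ):ℝ) := by exact_mod_cast congrArg (Int.cast : ℤ → ℝ) this.symm
      linarith
    have hn : (n : ℝ) - (2 * (n / 2 : ℤ) + 1/2) = (n % 2 : ℤ) - 1/2 := by
      have := Int.mul_ediv_add_emod n 2
      have : (n:ℝ) = 2 * ((n/2 : ℤ):ℝ) + ((n % 2 : ℤ):ℝ) := by exact_mod_cast congrArg (Int.cast : ℤ → ℝ) this.symm
      linarith
    have hm2 : ((m % 2 : ℤ) : ℝ) = 0 ∨ ((m % 2 : ℤ) : ℝ) = 1 := by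
      rcases Int.emod_two_eq m with h | h <;> simp [h]
    have hn2 : ((n % 2 : ℤ) : ℝ) = 0 ∨ ((n % 2 : ℤ) : ℝ) = 1 := by
      rcases Int.emod_two_eq n with h | h <;> simp [h]
    have e0 : p 0 - ctr d (m/2, n/2) 0 = d * ((m:ℝ) - (2 * (m/2 : ℤ) + 1/2)) := by
      simp [ctr, h0]; ring
    have e1 : p 1 - ctr d (m/2, n/2) 1 = d * ((n:ℝ) - (2 * (n/2 : ℤ) + 1/2)) := by
      simp [ctr, h1]; ring
    rw [e0, e1, hm, hn]
    have hb : (d * (((m % 2 : ℤ):ℝ) - 1/2))^2 + (d * (((n % 2 : ℤ):ℝ) - 1/2))^2 ≤ 1 := by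
      rcases hm2 with h | h <;> rcases hn2 with h' | h' <;> rw [h, h'] <;> nlinarith
    calc Real.sqrt _ ≤ Real.sqrt 1 := Real.sqrt_le_sqrt hb
      _ = 1 := Real.sqrt_one
end

section
/- For every real number d with 4/√26 ≤ d, the lattice L_d can be covered by closed unit disks with pairwise disjoint interiors. -/
namespace LatticeCover

lemma dist_coord (p q : EuclideanSpace ℝ (Fin 2)) :
    dist p q = Real.sqrt ((p 0 - q 0)^2 + (p 1 - q 1)^2) := by
  rw [EuclideanSpace.dist_eq, Fin.sum_univ_two]
  simp [Real.dist_eq, sq_abs]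

lemma one_le_sq_int {u : ℤ} (h : u ≠ 0) : 1 ≤ u^2 := by
  nlinarith [Int.one_le_abs h, sq_abs u]

/-- Master lemma: a family of planar centers given by coordinate functions, with
pairwise squared distance `≥ 4`, each lattice point within squared distance `1`. -/
lemma master (d : ℝ) (ι : Type) (cx cy : ι → ℝ)
    (hsep : ∀ i j : ι, i ≠ j → 4 ≤ (cx i - cx j)^2 + (cy i - cy j)^2)
    (hcov : ∀ m n : ℤ, ∃ i, (d*m - cx i)^2 + (d*n - cy i)^2 ≤ 1) :
    CoverableByUnitDisks (squareLattice d) := by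
  refine ⟨ι, fun i => (!₂[cx i, cy i] : EuclideanSpace ℝ (Fin 2)), ?_, ?_⟩
  · intro i j hij
    rw [dist_coord]
    have h4 := hsep i j hij
    show 2 ≤ Real.sqrt ((cx i - cx j)^2 + (cy i - cy j)^2)
    rw [show (2:ℝ) = Real.sqrt 4 by
      rw [show (4:ℝ) = 2^2 by norm_num, Real.sqrt_sq]; norm_num]
    exact Real.sqrt_le_sqrt h4
  · rintro p ⟨m, n, h0, h1⟩
    obtain ⟨i, hi⟩ := hcov m n
    refine Set.mem_iUnion.2 ⟨i, ?_⟩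
    rw [Metric.mem_closedBall, dist_coord]
    show Real.sqrt ((p 0 - cx i)^2 + (p 1 - cy i)^2) ≤ 1
    rw [h0, h1]
    exact Real.sqrt_le_one.2 hi

/-! ### Regime 1 : `2 ≤ d`. Centers at the lattice points themselves. -/

lemma regime1 (d : ℝ) (h1 : 4 ≤ d^2) : CoverableByUnitDisks (squareLattice d) := by
  apply master d (ℤ × ℤ) (fun i => d * i.1) (fun i => d * i.2)
  · rintro ⟨a, b⟩ ⟨a', b'⟩ hne
    have hne2 : a - a' ≠ 0 ∨ b - b' ≠ 0 := by
      by_contra h; push_neg at h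
      exact hne (by simp only [Prod.mk.injEq]; omega)
    have hint : (1:ℤ) ≤ (a-a')^2 + (b-b')^2 := by
      rcases hne2 with h | h
      · nlinarith [one_le_sq_int h, sq_nonneg (b - b')]
      · nlinarith [one_le_sq_int h, sq_nonneg (a - a')]
    have hR : (1:ℝ) ≤ ((a:ℝ)-a')^2 + ((b:ℝ)-b')^2 := by exact_mod_cast hint
    have e1 : d * (a:ℝ) - d * (a':ℝ) = d * ((a:ℝ) - a') := by ring
    have e2 : d * (b:ℝ) - d * (b':ℝ) = d * ((b:ℝ) - b') := by ring
    simp only [e1, e2]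
    nlinarith [mul_nonneg (sq_nonneg d)
      (by linarith : (0:ℝ) ≤ ((a:ℝ)-a')^2 + ((b:ℝ)-b')^2 - 1), h1]
  · intro m n
    exact ⟨(m, n), by simp⟩

/-! ### Regime 2 : `√2 ≤ d ≤ 2`. Staggered horizontal dominoes. -/

lemma regime2 (d : ℝ) (h1 : 2 ≤ d^2) (h2 : d^2 ≤ 4) :
    CoverableByUnitDisks (squareLattice d) := by
  apply master d (ℤ × ℤ) (fun i => d * (2*i.1 + i.2) + d/2) (fun i => d * i.2)
  · rintro ⟨k, n⟩ ⟨k', n'⟩ hne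
    set s : ℤ := 2*(k-k') + (n-n') with hs
    set t : ℤ := n - n' with ht
    have hne2 : ¬(k - k' = 0 ∧ t = 0) := by
      intro h; exact hne (by simp only [Prod.mk.injEq]; omega)
    have hint : (2:ℤ) ≤ s^2 + t^2 := by
      rcases eq_or_ne t 0 with h | h
      · have hk : k - k' ≠ 0 := fun hk => hne2 ⟨hk, h⟩
        have : s ≠ 0 := by omega
        have h2s : 2 ≤ |s| := by
          rcases abs_cases s with ⟨ha, _⟩ | ⟨ha, _⟩ <;> omega
        nlinarith [sq_abs s, sq_nonneg t]
      · rcases eq_or_ne s 0 with h' | h'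
        · have : t ≠ 0 ∧ 2*(k-k') + t = 0 := ⟨h, by omega⟩
          have h2t : 2 ≤ |t| := by
            rcases abs_cases t with ⟨ha, _⟩ | ⟨ha, _⟩ <;> omega
          nlinarith [sq_abs t, sq_nonneg s]
        · nlinarith [one_le_sq_int h, one_le_sq_int h']
    have hR : (2:ℝ) ≤ (s:ℝ)^2 + (t:ℝ)^2 := by exact_mod_cast hint
    have e1 : (d * (2*(k:ℝ) + n) + d/2) - (d * (2*(k':ℝ) + n') + d/2) = d * (s:ℝ) := by
      push_cast [hs, ht]; ring
    have e2 : d * (n:ℝ) - d * (n':ℝ) = d * (t:ℝ) := by push_cast [ht]; ring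
    simp only [e1, e2]
    nlinarith [mul_nonneg (sq_nonneg d)
      (by linarith : (0:ℝ) ≤ (s:ℝ)^2 + (t:ℝ)^2 - 2), h1]
  · intro m n
    obtain ⟨k, hk⟩ : ∃ k : ℤ, m - n - 2*k = 0 ∨ m - n - 2*k = 1 := ⟨(m - n) / 2, by omega⟩
    refine ⟨(k, n), ?_⟩
    have e2 : d * (n:ℝ) - d * (n:ℝ) = 0 := by ring
    rcases hk with h | h
    · have em : (m:ℝ) = 2*(k:ℝ) + n := by exact_mod_cast (by omega : m = 2*k + n)
      have e1 : d * (m:ℝ) - (d * (2*(k:ℝ) + n) + d/2) = -(d/2) := by rw [em]; ring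
      rw [e1, e2]; nlinarith
    · have em : (m:ℝ) = 2*(k:ℝ) + n + 1 := by exact_mod_cast (by omega : m = 2*k + n + 1)
      have e1 : d * (m:ℝ) - (d * (2*(k:ℝ) + n) + d/2) = d/2 := by rw [em]; ring
      rw [e1, e2]; nlinarith

/-! ### Regime 3 : `1 ≤ d ≤ √2`. 2×2 blocks. -/

lemma regime3 (d : ℝ) (h1 : 1 ≤ d^2) (h2 : d^2 ≤ 2) :
    CoverableByUnitDisks (squareLattice d) := by
  apply master d (ℤ × ℤ) (fun i => 2*d*i.1 + d/2) (fun i => 2*d*i.2 + d/2)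
  · rintro ⟨k, l⟩ ⟨k', l'⟩ hne
    have hne2 : k - k' ≠ 0 ∨ l - l' ≠ 0 := by
      by_contra h; push_neg at h
      exact hne (by simp only [Prod.mk.injEq]; omega)
    have hint : (1:ℤ) ≤ (k-k')^2 + (l-l')^2 := by
      rcases hne2 with h | h
      · nlinarith [one_le_sq_int h, sq_nonneg (l - l')]
      · nlinarith [one_le_sq_int h, sq_nonneg (k - k')]
    have hR : (1:ℝ) ≤ ((k:ℝ)-k')^2 + ((l:ℝ)-l')^2 := by exact_mod_cast hint
    have e1 : (2*d*(k:ℝ) + d/2) - (2*d*(k':ℝ) + d/2) = 2*d*((k:ℝ)-k') := by ring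
    have e2 : (2*d*(l:ℝ) + d/2) - (2*d*(l':ℝ) + d/2) = 2*d*((l:ℝ)-l') := by ring
    simp only [e1, e2]
    nlinarith [mul_nonneg (sq_nonneg d)
      (by linarith : (0:ℝ) ≤ ((k:ℝ)-k')^2 + ((l:ℝ)-l')^2 - 1), h1]
  · intro m n
    obtain ⟨k, hk⟩ : ∃ k : ℤ, m - 2*k = 0 ∨ m - 2*k = 1 := ⟨m / 2, by omega⟩
    obtain ⟨l, hl⟩ : ∃ l : ℤ, n - 2*l = 0 ∨ n - 2*l = 1 := ⟨n / 2, by omega⟩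
    refine ⟨(k, l), ?_⟩
    have e1 : (d*(m:ℝ) - (2*d*(k:ℝ) + d/2))^2 = (d/2)^2 := by
      rcases hk with h | h
      · have em : (m:ℝ) = 2*(k:ℝ) := by exact_mod_cast (by omega : m = 2*k)
        rw [em]; ring
      · have em : (m:ℝ) = 2*(k:ℝ) + 1 := by exact_mod_cast (by omega : m = 2*k + 1)
        rw [em]; ring
    have e2 : (d*(n:ℝ) - (2*d*(l:ℝ) + d/2))^2 = (d/2)^2 := by
      rcases hl with h | h
      · have em : (n:ℝ) = 2*(l:ℝ) := by exact_mod_cast (by omega : n = 2*l)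
        rw [em]; ring
      · have em : (n:ℝ) = 2*(l:ℝ) + 1 := by exact_mod_cast (by omega : n = 2*l + 1)
        rw [em]; ring
    rw [e1, e2]; nlinarith

/-! ### Regime 4 : `2/√5 ≤ d ≤ 1`. Plus-pentomino tiling, centers on the
index-5 sublattice `{(a,b) : b ≡ 2a (mod 5)}`. -/

lemma cover4_int (m n : ℤ) :
    ∃ k l ox oy : ℤ, m = k + 2*l + ox ∧ n = 2*k - l + oy ∧ ox^2 + oy^2 ≤ 1 := by
  have key : ∃ ox oy : ℤ, ox^2 + oy^2 ≤ 1 ∧ (5:ℤ) ∣ (2*m - n - 2*ox + oy) := by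
    have h : (2*m - n) % 5 = 0 ∨ (2*m - n) % 5 = 1 ∨ (2*m - n) % 5 = 2 ∨
        (2*m - n) % 5 = 3 ∨ (2*m - n) % 5 = 4 := by omega
    rcases h with h | h | h | h | h
    · exact ⟨0, 0, by norm_num, by omega⟩
    · exact ⟨0, -1, by norm_num, by omega⟩
    · exact ⟨1, 0, by norm_num, by omega⟩
    · exact ⟨-1, 0, by norm_num, by omega⟩
    · exact ⟨0, 1, by norm_num, by omega⟩
  obtain ⟨ox, oy, hn, l, hl⟩ := key
  exact ⟨m - ox - 2*l, l, ox, oy, by omega, by omega, hn⟩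

lemma regime4 (d : ℝ) (h1 : 4/5 ≤ d^2) (h2 : d^2 ≤ 1) :
    CoverableByUnitDisks (squareLattice d) := by
  apply master d (ℤ × ℤ) (fun i => d * (i.1 + 2*i.2)) (fun i => d * (2*i.1 - i.2))
  · rintro ⟨k, l⟩ ⟨k', l'⟩ hne
    set u : ℤ := k - k' with hu
    set v : ℤ := l - l' with hv
    have hne2 : u ≠ 0 ∨ v ≠ 0 := by
      by_contra h; push_neg at h
      exact hne (by simp only [Prod.mk.injEq]; omega)
    have hint : (1:ℤ) ≤ u^2 + v^2 := by
      rcases hne2 with h | h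
      · nlinarith [one_le_sq_int h, sq_nonneg v]
      · nlinarith [one_le_sq_int h, sq_nonneg u]
    have hR : (1:ℝ) ≤ (u:ℝ)^2 + (v:ℝ)^2 := by exact_mod_cast hint
    have e1 : d * ((k:ℝ) + 2*l) - d * ((k':ℝ) + 2*l') = d * ((u:ℝ) + 2*v) := by
      push_cast [hu, hv]; ring
    have e2 : d * (2*(k:ℝ) - l) - d * (2*(k':ℝ) - l') = d * (2*(u:ℝ) - v) := by
      push_cast [hu, hv]; ring
    simp only [e1, e2]
    nlinarith [mul_nonneg (sq_nonneg d)
      (by nlinarith : (0:ℝ) ≤ 5*((u:ℝ)^2 + (v:ℝ)^2) - 5), h1,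
      mul_nonneg (sq_nonneg d) (by linarith : (0:ℝ) ≤ (u:ℝ)^2 + (v:ℝ)^2 - 1)]
  · intro m n
    obtain ⟨k, l, ox, oy, hm, hn, hno⟩ := cover4_int m n
    refine ⟨(k, l), ?_⟩
    have hoR : ((ox:ℝ))^2 + ((oy:ℝ))^2 ≤ 1 := by exact_mod_cast hno
    have e1 : d * (m:ℝ) - d * ((k:ℝ) + 2*l) = d * (ox:ℝ) := by
      have : (m:ℝ) = (k:ℝ) + 2*l + ox := by exact_mod_cast hm
      rw [this]; ring
    have e2 : d * (n:ℝ) - d * (2*(k:ℝ) - l) = d * (oy:ℝ) := by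
      have : (n:ℝ) = 2*(k:ℝ) - l + oy := by exact_mod_cast hn
      rw [this]; ring
    rw [e1, e2]
    nlinarith [mul_nonneg (sq_nonneg d)
      (by linarith : (0:ℝ) ≤ 1 - ((ox:ℝ)^2 + (oy:ℝ)^2)), sq_nonneg d]

/-! ### Regime 5 : `4/√26 ≤ d ≤ 2/√5`. Herringbone tiling by 2×3 and 3×2 bricks,
doubled centers at `(1,0) + a•(1,5) + b•(5,1)`. -/

lemma cover5_int (m n : ℤ) :
    ∃ a b ox oy : ℤ, 2*m = 1 + a + 5*b + ox ∧ 2*n = 5*a + b + oy ∧ ox^2 + oy^2 ≤ 5 := by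
  have key : ∃ ox oy : ℤ, ox^2 + oy^2 ≤ 5 ∧ (24:ℤ) ∣ (10*m - 5 - 5*ox - 2*n + oy) := by
    have h : (10*m - 2*n - 5) % 24 = 1 ∨ (10*m - 2*n - 5) % 24 = 3 ∨
        (10*m - 2*n - 5) % 24 = 5 ∨ (10*m - 2*n - 5) % 24 = 7 ∨
        (10*m - 2*n - 5) % 24 = 9 ∨ (10*m - 2*n - 5) % 24 = 11 ∨
        (10*m - 2*n - 5) % 24 = 13 ∨ (10*m - 2*n - 5) % 24 = 15 ∨
        (10*m - 2*n - 5) % 24 = 17 ∨ (10*m - 2*n - 5) % 24 = 19 ∨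
        (10*m - 2*n - 5) % 24 = 21 ∨ (10*m - 2*n - 5) % 24 = 23 := by omega
    rcases h with h | h | h | h | h | h | h | h | h | h | h | h
    · exact ⟨0, -1, by norm_num, by omega⟩
    · exact ⟨1, 2, by norm_num, by omega⟩
    · exact ⟨1, 0, by norm_num, by omega⟩
    · exact ⟨1, -2, by norm_num, by omega⟩
    · exact ⟨2, 1, by norm_num, by omega⟩
    · exact ⟨2, -1, by norm_num, by omega⟩
    · exact ⟨-2, 1, by norm_num, by omega⟩
    · exact ⟨-2, -1, by norm_num, by omega⟩
    · exact ⟨-1, 2, by norm_num, by omega⟩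
    · exact ⟨-1, 0, by norm_num, by omega⟩
    · exact ⟨-1, -2, by norm_num, by omega⟩
    · exact ⟨0, 1, by norm_num, by omega⟩
  obtain ⟨ox, oy, hn, b, hb⟩ := key
  exact ⟨2*m - 1 - ox - 5*b, b, ox, oy, by omega, by omega, hn⟩

lemma sep5_int (u v : ℤ) (h : u ≠ 0 ∨ v ≠ 0) :
    26 ≤ 26*(u^2 + v^2) + 20*u*v := by
  rcases eq_or_ne (u + v) 0 with h3 | h3
  · have hu : u ≠ 0 := by rcases h with h | h; exact h; omega
    have hv : v = -u := by omega
    subst hv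
    nlinarith [one_le_sq_int hu]
  · have h4 : 1 ≤ (u + v)^2 := one_le_sq_int h3
    have h5 : 1 ≤ u^2 + v^2 := by
      rcases h with h | h
      · nlinarith [one_le_sq_int h, sq_nonneg v]
      · nlinarith [one_le_sq_int h, sq_nonneg u]
    nlinarith

lemma regime5 (d : ℝ) (h1 : 16/26 ≤ d^2) (h2 : d^2 ≤ 4/5) :
    CoverableByUnitDisks (squareLattice d) := by
  apply master d (ℤ × ℤ) (fun i => d * (1 + i.1 + 5*i.2) / 2) (fun i => d * (5*i.1 + i.2) / 2)
  · rintro ⟨a, b⟩ ⟨a', b'⟩ hne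
    set u : ℤ := a - a' with hu
    set v : ℤ := b - b' with hv
    have hne2 : u ≠ 0 ∨ v ≠ 0 := by
      by_contra h; push_neg at h
      exact hne (by simp only [Prod.mk.injEq]; omega)
    have hint := sep5_int u v hne2
    have hR : (26:ℝ) ≤ 26*((u:ℝ)^2 + (v:ℝ)^2) + 20*(u:ℝ)*(v:ℝ) := by exact_mod_cast hint
    have e1 : d * (1 + (a:ℝ) + 5*b) / 2 - d * (1 + (a':ℝ) + 5*b') / 2
        = d * ((u:ℝ) + 5*v) / 2 := by push_cast [hu, hv]; ring
    have e2 : d * (5*(a:ℝ) + b) / 2 - d * (5*(a':ℝ) + b') / 2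
        = d * (5*(u:ℝ) + v) / 2 := by push_cast [hu, hv]; ring
    simp only [e1, e2]
    nlinarith [mul_nonneg (sq_nonneg d)
      (by linarith : (0:ℝ) ≤ 26*((u:ℝ)^2 + (v:ℝ)^2) + 20*(u:ℝ)*(v:ℝ) - 26), h1]
  · intro m n
    obtain ⟨a, b, ox, oy, hm, hn, hno⟩ := cover5_int m n
    refine ⟨(a, b), ?_⟩
    have hoR : ((ox:ℝ))^2 + ((oy:ℝ))^2 ≤ 5 := by exact_mod_cast hno
    have hm2 : 2*(m:ℝ) = 1 + (a:ℝ) + 5*b + ox := by exact_mod_cast hm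
    have hn2 : 2*(n:ℝ) = 5*(a:ℝ) + b + oy := by exact_mod_cast hn
    have hm' : (m:ℝ) = (1 + (a:ℝ) + 5*b + ox)/2 := by linarith
    have hn' : (n:ℝ) = (5*(a:ℝ) + b + oy)/2 := by linarith
    have e1 : d * (m:ℝ) - d * (1 + (a:ℝ) + 5*b) / 2 = d * (ox:ℝ) / 2 := by
      rw [hm']; ring
    have e2 : d * (n:ℝ) - d * (5*(a:ℝ) + b) / 2 = d * (oy:ℝ) / 2 := by
      rw [hn']; ring
    rw [e1, e2]
    nlinarith [mul_nonneg (sq_nonneg d)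
      (by linarith : (0:ℝ) ≤ 5 - ((ox:ℝ)^2 + (oy:ℝ)^2)), sq_nonneg d]

end LatticeCover

theorem lattice_coverable_upper (d : ℝ) (hd : 4 / Real.sqrt 26 ≤ d) :
    CoverableByUnitDisks (squareLattice d) := by
  have h26 : (0:ℝ) < Real.sqrt 26 := Real.sqrt_pos.2 (by norm_num)
  have h5 : (0:ℝ) < Real.sqrt 5 := Real.sqrt_pos.2 (by norm_num)
  have hd0 : (0:ℝ) ≤ d := le_trans (by positivity) hd
  have hdsq : 16/26 ≤ d^2 := by
    have h := pow_le_pow_left₀ (by positivity : (0:ℝ) ≤ 4 / Real.sqrt 26) hd 2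
    rw [div_pow, Real.sq_sqrt (by norm_num : (0:ℝ) ≤ 26)] at h
    norm_num at h ⊢
    linarith
  rcases le_total d (2 / Real.sqrt 5) with h1 | h1
  · have hup : d^2 ≤ 4/5 := by
      have h := pow_le_pow_left₀ hd0 h1 2
      rw [div_pow, Real.sq_sqrt (by norm_num : (0:ℝ) ≤ 5)] at h
      norm_num at h ⊢
      linarith
    exact LatticeCover.regime5 d hdsq hup
  · have hlo45 : 4/5 ≤ d^2 := by
      have h := pow_le_pow_left₀ (by positivity : (0:ℝ) ≤ 2 / Real.sqrt 5) h1 2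
      rw [div_pow, Real.sq_sqrt (by norm_num : (0:ℝ) ≤ 5)] at h
      norm_num at h ⊢
      linarith
    rcases le_total d 1 with h2 | h2
    · have hup : d^2 ≤ 1 := by nlinarith
      exact LatticeCover.regime4 d hlo45 hup
    · have hlo1 : 1 ≤ d^2 := by nlinarith
      rcases le_total d (Real.sqrt 2) with h3 | h3
      · have hup : d^2 ≤ 2 := by
          have h := pow_le_pow_left₀ hd0 h3 2
          rwa [Real.sq_sqrt (by norm_num : (0:ℝ) ≤ 2)] at h
        exact LatticeCover.regime3 d hlo1 hup
      · have hlo2 : 2 ≤ d^2 := by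
          have h := pow_le_pow_left₀ (Real.sqrt_nonneg 2) h3 2
          rwa [Real.sq_sqrt (by norm_num : (0:ℝ) ≤ 2)] at h
        rcases le_total d 2 with h4 | h4
        · have hup : d^2 ≤ 4 := by nlinarith
          exact LatticeCover.regime2 d hlo2 hup
        · have hlo4 : 4 ≤ d^2 := by nlinarith
          exact LatticeCover.regime1 d hlo4
end
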